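/- (Closed form for the initialized online DMD recursion.) Let A₀ be any real n×n matrix, α > 0, and set P₀ = α I. Given snapshot pairs x₁, y₁, x₂, y₂, … in ℝⁿ, define recursively γ_{k+1} = 1/(1 + x_{k+1}ᵀ P_k x_{k+1}), A_{k+1} = A_k + γ_{k+1} (y_{k+1} − A_k x_{k+1}) x_{k+1}ᵀ P_k, and P_{k+1} = P_k − γ_{k+1} P_k x_{k+1} x_{k+1}ᵀ P_k. Then for every k ≥ 0 the matrix α⁻¹ I + Σ_{i=1}^k xᵢ xᵢᵀ is positive definite (hence invertible), P_k = (α⁻¹ I + Σ_{i=1}^k xᵢ xᵢᵀ)⁻¹, and A_k = (α⁻¹ A₀ + Σ_{i=1}^k yᵢ xᵢᵀ) P_k. -/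

import Mathlib

open Matrix

lemma vecMulVec_mul' {n : ℕ} (u v : Fin n → ℝ) (B : Matrix (Fin n) (Fin n) ℝ) :
    vecMulVec u v * B = vecMulVec u (vecMul v B) := by
  ext i j
  simp [vecMulVec_apply, mul_apply, vecMul, dotProduct, Finset.mul_sum, mul_assoc]

lemma mul_vecMulVec' {n : ℕ} (u v : Fin n → ℝ) (B : Matrix (Fin n) (Fin n) ℝ) :
    B * vecMulVec u v = vecMulVec (B.mulVec u) v := by
  ext i j
  simp only [vecMulVec_apply, mul_apply, mulVec, dotProduct, Finset.sum_mul]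
  exact Finset.sum_congr rfl fun k _ => by ring

lemma vecMulVec_mul_vecMulVec' {n : ℕ} (u v w z : Fin n → ℝ) :
    vecMulVec u v * vecMulVec w z = (v ⬝ᵥ w) • vecMulVec u z := by
  ext i j
  simp [vecMulVec_apply, mul_apply, dotProduct, Finset.sum_mul, Finset.mul_sum]
  ring_nf
  exact Finset.sum_congr rfl fun k _ => by ring

lemma vecMulVec_sub_left' {n : ℕ} (a b v : Fin n → ℝ) :
    vecMulVec (a - b) v = vecMulVec a v - vecMulVec b v := by
  ext i j; simp [vecMulVec_apply, sub_mul]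

lemma posSemidef_vecMulVec' {n : ℕ} (u : Fin n → ℝ) :
    (vecMulVec u u).PosSemidef := by
  refine posSemidef_iff_dotProduct_mulVec.mpr ⟨?_, ?_⟩
  · ext i j; simp [vecMulVec_apply, conjTranspose_apply, mul_comm]
  · intro v
    have : (vecMulVec u u).mulVec v = (u ⬝ᵥ v) • u := by
      ext i
      simp only [mulVec, vecMulVec_apply, dotProduct, Pi.smul_apply, smul_eq_mul,
        Finset.sum_mul]
      exact Finset.sum_congr rfl fun k _ => by ring
    rw [this]
    simp only [star_trivial, dotProduct_smul, smul_eq_mul]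
    rw [dotProduct_comm]
    exact mul_self_nonneg _

lemma posDef_smul_one' {n : ℕ} {β : ℝ} (hβ : 0 < β) :
    (β • (1 : Matrix (Fin n) (Fin n) ℝ)).PosDef := by
  rw [smul_one_eq_diagonal]
  exact posDef_diagonal_iff.mpr fun _ => hβ


/-- Closed form for the initialized online DMD recursion: starting from `P₀ = α I`
and any `A₀`, the recursion
`γ_{k+1} = 1/(1 + x_{k+1}ᵀ P_k x_{k+1})`,
`A_{k+1} = A_k + γ_{k+1} (y_{k+1} − A_k x_{k+1}) x_{k+1}ᵀ P_k`,
`P_{k+1} = P_k − γ_{k+1} P_k x_{k+1} x_{k+1}ᵀ P_k`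
satisfies, for every `k`, that `α⁻¹ I + Σ_{i=1}^k xᵢ xᵢᵀ` is positive definite,
`P_k = (α⁻¹ I + Σ_{i=1}^k xᵢ xᵢᵀ)⁻¹`, and
`A_k = (α⁻¹ A₀ + Σ_{i=1}^k yᵢ xᵢᵀ) P_k`. -/
theorem online_dmd_recursion_closed_form (n : ℕ) (α : ℝ) (hα : 0 < α)
    (x y : ℕ → (Fin n → ℝ)) (A P : ℕ → Matrix (Fin n) (Fin n) ℝ)
    (hP0 : P 0 = α • (1 : Matrix (Fin n) (Fin n) ℝ))
    (hA : ∀ k : ℕ, A (k + 1) =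
      A k + (1 / (1 + x (k + 1) ⬝ᵥ (P k).mulVec (x (k + 1)))) •
        (vecMulVec (y (k + 1) - (A k).mulVec (x (k + 1))) (x (k + 1)) * P k))
    (hP : ∀ k : ℕ, P (k + 1) =
      P k - (1 / (1 + x (k + 1) ⬝ᵥ (P k).mulVec (x (k + 1)))) •
        (P k * vecMulVec (x (k + 1)) (x (k + 1)) * P k)) :
    ∀ k : ℕ,
      (α⁻¹ • (1 : Matrix (Fin n) (Fin n) ℝ) +
        ∑ i ∈ Finset.range k, vecMulVec (x (i + 1)) (x (i + 1))).PosDef ∧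
      P k = (α⁻¹ • (1 : Matrix (Fin n) (Fin n) ℝ) +
        ∑ i ∈ Finset.range k, vecMulVec (x (i + 1)) (x (i + 1)))⁻¹ ∧
      A k = (α⁻¹ • A 0 +
        ∑ i ∈ Finset.range k, vecMulVec (y (i + 1)) (x (i + 1))) * P k := by
  intro k
  induction k with
  | zero =>
    have h0 : (α⁻¹ • (1 : Matrix (Fin n) (Fin n) ℝ)) * (α • (1 : Matrix (Fin n) (Fin n) ℝ))
        = 1 := by
      rw [smul_mul_smul_comm, one_mul, inv_mul_cancel₀ hα.ne', one_smul]
    refine ⟨?_, ?_, ?_⟩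
    · simpa using posDef_smul_one' (n := n) (inv_pos.mpr hα)
    · simpa [hP0] using (inv_eq_right_inv h0).symm
    · simp [hP0, Matrix.mul_smul, smul_smul, mul_inv_cancel₀ hα.ne', inv_mul_cancel₀ hα.ne']
  | succ k ih =>
    obtain ⟨hpos, hPk, hAk⟩ := ih
    set S : Matrix (Fin n) (Fin n) ℝ := α⁻¹ • (1 : Matrix (Fin n) (Fin n) ℝ) +
      ∑ i ∈ Finset.range k, vecMulVec (x (i + 1)) (x (i + 1)) with hS
    set C : Matrix (Fin n) (Fin n) ℝ := α⁻¹ • A 0 +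
      ∑ i ∈ Finset.range k, vecMulVec (y (i + 1)) (x (i + 1)) with hC
    set x' := x (k + 1)
    set y' := y (k + 1)
    set M : Matrix (Fin n) (Fin n) ℝ := vecMulVec x' x' with hM
    set Y : Matrix (Fin n) (Fin n) ℝ := vecMulVec y' x' with hY
    set c : ℝ := x' ⬝ᵥ (P k).mulVec x' with hc
    set γ : ℝ := 1 / (1 + c) with hγ
    -- nonnegativity of c
    have hPkpos : (P k).PosDef := by rw [hPk]; exact hpos.inv
    have hc0 : 0 ≤ c := by
      rcases eq_or_ne x' 0 with h | h
      · simp [hc, h]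
      · exact le_of_lt (by simpa using hPkpos.dotProduct_mulVec_pos h)
    have h1c : (0 : ℝ) < 1 + c := by linarith
    have hgc : γ * c = 1 - γ := by
      rw [hγ]; field_simp; ring
    have hS1 : S * P k = 1 := by
      rw [hPk]
      exact mul_nonsing_inv S ((isUnit_iff_isUnit_det S).mp hpos.isUnit)
    -- sums at k+1
    have hsumx : ∑ i ∈ Finset.range (k + 1), vecMulVec (x (i + 1)) (x (i + 1)) =
        (∑ i ∈ Finset.range k, vecMulVec (x (i + 1)) (x (i + 1))) + M :=
      Finset.sum_range_succ _ _
    have hsumy : ∑ i ∈ Finset.range (k + 1), vecMulVec (y (i + 1)) (x (i + 1)) =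
        (∑ i ∈ Finset.range k, vecMulVec (y (i + 1)) (x (i + 1))) + Y :=
      Finset.sum_range_succ _ _
    have hS' : α⁻¹ • (1 : Matrix (Fin n) (Fin n) ℝ) +
        ∑ i ∈ Finset.range (k + 1), vecMulVec (x (i + 1)) (x (i + 1)) = S + M := by
      rw [hsumx, hS, add_assoc]
    have hC' : α⁻¹ • A 0 +
        ∑ i ∈ Finset.range (k + 1), vecMulVec (y (i + 1)) (x (i + 1)) = C + Y := by
      rw [hsumy, hC, add_assoc]
    have hposS' : (S + M).PosDef := hpos.add_posSemidef (posSemidef_vecMulVec' x')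
    -- products
    have hPkM : P k * M = vecMulVec ((P k).mulVec x') x' := mul_vecMulVec' x' x' (P k)
    have hMPM : M * (P k * M) = c • M := by
      rw [hPkM, hM, vecMulVec_mul_vecMulVec', hc]
    have hYPM : Y * (P k * M) = c • Y := by
      rw [hPkM, hY, vecMulVec_mul_vecMulVec', hc]
    have hSPMP : S * (P k * M * P k) = M * P k := by
      rw [← mul_assoc, ← mul_assoc, hS1, one_mul]
    have hMPMP : M * (P k * M * P k) = c • (M * P k) := by
      rw [← mul_assoc, hMPM, smul_mul_assoc]
    have hYPMP : Y * (P k * M * P k) = c • (Y * P k) := by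
      rw [← mul_assoc, hYPM, smul_mul_assoc]
    -- key inverse identity
    have key : (S + M) * (P k - γ • (P k * M * P k)) = 1 := by
      rw [mul_sub, mul_smul_comm, add_mul S M (P k), add_mul S M (P k * M * P k),
        hS1, hSPMP, hMPMP, smul_add, smul_smul, hgc]
      module
    have hPk1 : P (k + 1) = P k - γ • (P k * M * P k) := hP k
    have hPk1' : P (k + 1) = (S + M)⁻¹ := by
      rw [hPk1, inv_eq_right_inv key]
    refine ⟨?_, ?_, ?_⟩
    · rw [hS']; exact hposS'
    · rw [hS']; exact hPk1'
    · -- A part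
      have hCP : C * P k = A k := hAk.symm
      have hCPMP : C * (P k * M * P k) = A k * (M * P k) := by
        rw [← mul_assoc, ← mul_assoc, hCP, mul_assoc]
      have hsub : vecMulVec (y' - (A k).mulVec x') x' = Y - A k * M := by
        rw [vecMulVec_sub_left', hY, hM, mul_vecMulVec']
      have lhs : A (k + 1) = A k + γ • (Y * P k) - γ • (A k * (M * P k)) := by
        rw [hA k, hsub]
        rw [sub_mul, smul_sub, mul_assoc]
        abel
      rw [lhs, hC', hPk1, mul_sub, mul_smul_comm, add_mul C Y (P k),
        add_mul C Y (P k * M * P k), hCP, hCPMP, hYPMP, smul_add, smul_smul, hgc]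
      module
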